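/- arXiv:1805.04073 — 3 statements merged into one kernel-verified Lean document; each statement's English description precedes it below -/
import Mathlib

section
/- Let F be a field and let f : A → B be a morphism in GrAlg_F (respectively, in GrAlg¹_F), where A = ⊕_{g∈G} A^(g). Then f is a monomorphism if and only if for all homogeneous elements a, b ∈ ⋃_{g∈G} A^(g) with a ≠ b one has f(a) ≠ f(b). In particular, every monomorphism in GrAlg_F or GrAlg¹_F is graded injective. -/
set_option autoImplicit false

universe u

/-- A group grading on a (not necessarily unital) associative algebra over `F`:
an object of the category `GrAlg_F`. -/
structure GrAlg (F : Type u) [Field F] : Type (u + 1) where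
  A : Type u
  [ringA : NonUnitalRing A]
  [modA : Module F A]
  [sccA : SMulCommClass F A A]
  [istA : IsScalarTower F A A]
  G : Type u
  [grpG : Group G]
  comp : G → Submodule F A
  mul_mem : ∀ ⦃g h : G⦄ ⦃a b : A⦄, a ∈ comp g → b ∈ comp h → a * b ∈ comp (g * h)
  independent : iSupIndep comp
  spans : (⨆ g, comp g) = ⊤

attribute [instance] GrAlg.ringA GrAlg.modA GrAlg.sccA GrAlg.istA GrAlg.grpG

variable {F : Type u} [Field F]

/-- The grading is trivial if all components other than the identity component vanish. -/
def GrAlg.IsTrivialGrading (X : GrAlg F) : Prop := ∀ g : X.G, g ≠ 1 → X.comp g = ⊥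

/-- The support of a grading. -/
def GrAlg.supp (X : GrAlg F) : Set X.G := {g | X.comp g ≠ ⊥}

/-- A morphism in `GrAlg_F`: an algebra homomorphism mapping each graded component
into some graded component. -/
@[ext]
structure GrAlgHom (X Y : GrAlg F) where
  hom : X.A →ₙₐ[F] Y.A
  graded : ∀ g : X.G, ∃ h : Y.G, ∀ a ∈ X.comp g, hom a ∈ Y.comp h

def GrAlgHom.id (X : GrAlg F) : GrAlgHom X X where
  hom := NonUnitalAlgHom.id F X.A
  graded g := ⟨g, fun a ha => ha⟩

def GrAlgHom.comp {X Y Z : GrAlg F} (g : GrAlgHom Y Z) (f : GrAlgHom X Y) :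
    GrAlgHom X Z where
  hom := g.hom.comp f.hom
  graded s := by
    obtain ⟨h, hh⟩ := f.graded s
    obtain ⟨k, hk⟩ := g.graded h
    exact ⟨k, fun a ha => by simpa using hk _ (hh a ha)⟩

/-- An object of `GrAlg¹_F`: a group grading on a unital associative algebra. -/
structure GrAlgOne (F : Type u) [Field F] extends GrAlg F : Type (u + 1) where
  one : A
  one_mul : ∀ a : A, one * a = a
  mul_one : ∀ a : A, a * one = a

/-- A morphism in `GrAlg¹_F`: a unital graded algebra homomorphism. -/
@[ext]
structure GrAlgOneHom (X Y : GrAlgOne F) extends GrAlgHom X.toGrAlg Y.toGrAlg where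
  map_one : toGrAlgHom.hom X.one = Y.one

def GrAlgOneHom.id (X : GrAlgOne F) : GrAlgOneHom X X where
  toGrAlgHom := GrAlgHom.id X.toGrAlg
  map_one := rfl

def GrAlgOneHom.comp {X Y Z : GrAlgOne F} (g : GrAlgOneHom Y Z) (f : GrAlgOneHom X Y) :
    GrAlgOneHom X Z where
  toGrAlgHom := g.toGrAlgHom.comp f.toGrAlgHom
  map_one := by
    show (g.toGrAlgHom.hom.comp f.toGrAlgHom.hom) X.one = Z.one
    simp [f.map_one, g.map_one]

/-- A morphism in `tilde{GrAlg_F}`: a graded injective homomorphism. -/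
@[ext]
structure TGrAlgHom (X Y : GrAlg F) extends GrAlgHom X Y where
  injOn : ∀ g : X.G, Set.InjOn toGrAlgHom.hom (X.comp g)

def TGrAlgHom.id (X : GrAlg F) : TGrAlgHom X X where
  toGrAlgHom := GrAlgHom.id X
  injOn g := fun a _ b _ hab => hab

def TGrAlgHom.comp {X Y Z : GrAlg F} (g : TGrAlgHom Y Z) (f : TGrAlgHom X Y) :
    TGrAlgHom X Z where
  toGrAlgHom := g.toGrAlgHom.comp f.toGrAlgHom
  injOn s := by
    intro a ha b hb hab
    obtain ⟨h, hh⟩ := f.graded s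
    exact f.injOn s ha hb (g.injOn h (hh a ha) (hh b hb) (by exact hab))

/-- A morphism in `tilde{GrAlg¹_F}`: a unital graded injective homomorphism. -/
@[ext]
structure TGrAlgOneHom (X Y : GrAlgOne F) extends TGrAlgHom X.toGrAlg Y.toGrAlg where
  map_one : toGrAlgHom.hom X.one = Y.one

def TGrAlgOneHom.id (X : GrAlgOne F) : TGrAlgOneHom X X where
  toTGrAlgHom := TGrAlgHom.id X.toGrAlg
  map_one := rfl

def TGrAlgOneHom.comp {X Y Z : GrAlgOne F} (g : TGrAlgOneHom Y Z) (f : TGrAlgOneHom X Y) :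
    TGrAlgOneHom X Z where
  toTGrAlgHom := g.toTGrAlgHom.comp f.toTGrAlgHom
  map_one := by
    show (g.toGrAlgHom.hom.comp f.toGrAlgHom.hom) X.one = Z.one
    simp [f.map_one, g.map_one]
/-! ### Auxiliary development -/

section Aux

open Polynomial

variable {F : Type u} [Field F]

/-- The unit of a graded unital algebra is homogeneous of degree 1. -/
theorem GrAlgOne.one_mem (X : GrAlgOne F) : X.one ∈ X.comp 1 := by
  classical
  have hInt : DirectSum.IsInternal X.comp :=
    (DirectSum.isInternal_submodule_iff_iSupIndep_and_iSup_eq_top _).mpr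
      ⟨X.independent, X.spans⟩
  letI := hInt.chooseDecomposition
  set u : X.A := (DirectSum.decompose X.comp X.one 1 : X.A) with hu
  have hmemu : u ∈ X.comp 1 := SetLike.coe_mem _
  have key : ∀ (h : X.G) (a : X.A), a ∈ X.comp h → u * a = a := by
    intro h a ha
    set c : X.G → X.A := fun g => (DirectSum.decompose X.comp X.one g : X.A) with hc
    have hcm : ∀ g, c g ∈ X.comp g := fun g => SetLike.coe_mem _
    set s := (DirectSum.decompose X.comp X.one).support with hs
    have hone : ∑ g ∈ s, c g = X.one := DirectSum.sum_support_decompose X.comp X.one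
    have ha2 : a = ∑ g ∈ s, c g * a := by
      rw [← Finset.sum_mul, hone, X.one_mul]
    set π : X.A →+ X.A :=
      ((X.comp h).subtype.toAddMonoidHom.comp
        ((DFinsupp.evalAddMonoidHom h).comp
          (DirectSum.decomposeAddEquiv X.comp).toAddMonoidHom)) with hπ
    have hπ_same : ∀ x ∈ X.comp h, π x = x := fun x hx =>
      DirectSum.decompose_of_mem_same X.comp hx
    have hπ_ne : ∀ (g : X.G), ∀ x ∈ X.comp g, g ≠ h → π x = 0 := by
      intro g x hx hne
      have := DirectSum.decompose_of_mem_ne X.comp hx hne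
      simp [hπ]
      exact Subtype.ext this
    have hπa : π a = a := hπ_same a ha
    have hπa2 : π a = ∑ g ∈ s, π (c g * a) := by
      conv_lhs => rw [ha2]
      exact map_sum π _ s
    have hterm : ∀ g ∈ s, π (c g * a) = if g = 1 then u * a else 0 := by
      intro g _
      by_cases hg : g = 1
      · subst hg
        rw [if_pos rfl]
        exact hπ_same _ (by simpa using X.mul_mem (hcm 1) ha)
      · rw [if_neg hg]
        refine hπ_ne (g * h) _ (X.mul_mem (hcm g) ha) ?_
        intro e
        exact hg (mul_right_cancel (b := h) (by rw [e]; exact (_root_.one_mul h).symm))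
    have hres : a = if 1 ∈ s then u * a else 0 := by
      calc a = π a := hπa.symm
        _ = ∑ g ∈ s, π (c g * a) := hπa2
        _ = ∑ g ∈ s, if g = 1 then u * a else 0 := Finset.sum_congr rfl hterm
        _ = if 1 ∈ s then u * a else 0 := Finset.sum_ite_eq' s 1 (fun _ => u * a)
    by_cases h1 : 1 ∈ s
    · conv_rhs => rw [hres, if_pos h1]
    · have hu0 : u = 0 := by
        have h2 : (DirectSum.decompose X.comp X.one) 1 = 0 :=
          DFinsupp.notMem_support_iff.mp (by simpa [hs] using h1)
        simp [hu, h2]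
      rw [hu0, zero_mul, hres, if_neg h1]
  have keyall : ∀ a : X.A, u * a = a := by
    intro a
    have hle : (⊤ : Submodule F X.A) ≤
        LinearMap.eqLocus (LinearMap.mulLeft F u) LinearMap.id := by
      rw [← X.spans]
      exact iSup_le fun g x hx => key g x hx
    exact hle Submodule.mem_top
  have h1 : u * X.one = X.one := keyall X.one
  have h2 : u * X.one = u := X.mul_one u
  rw [← h1, h2]
  exact hmemu

/-- degree-`n` component of the ℤ-grading on `F[x]` (zero for negative `n`). -/
def pcomp (F : Type u) [Field F] (n : Multiplicative (ULift.{u} ℤ)) :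
    Submodule F (Polynomial F) where
  carrier := {p | ∀ m : ℕ, (m : ℤ) ≠ (Multiplicative.toAdd n).down → p.coeff m = 0}
  add_mem' := by
    intro p q hp hq m hm
    simp [Polynomial.coeff_add, hp m hm, hq m hm]
  zero_mem' := by intro m hm; simp
  smul_mem' := by
    intro c p hp m hm
    simp [Polynomial.coeff_smul, hp m hm]

theorem mem_pcomp_iff {n : Multiplicative (ULift.{u} ℤ)} {p : Polynomial F} :
    p ∈ pcomp F n ↔ ∀ m : ℕ, (m : ℤ) ≠ (Multiplicative.toAdd n).down → p.coeff m = 0 :=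
  Iff.rfl

theorem monomial_mem_pcomp (k : ℕ) (c : F) :
    (Polynomial.monomial k c) ∈ pcomp F (Multiplicative.ofAdd (ULift.up (k : ℤ))) := by
  intro m hm
  rw [Polynomial.coeff_monomial, if_neg]
  intro e
  exact hm (by simp [← e])

theorem pcomp_mul_mem : ∀ ⦃g h : Multiplicative (ULift.{u} ℤ)⦄ ⦃p q : Polynomial F⦄,
    p ∈ pcomp F g → q ∈ pcomp F h → p * q ∈ pcomp F (g * h) := by
  intro g h p q hp hq m hm
  rw [Polynomial.coeff_mul]
  refine Finset.sum_eq_zero fun x hx => ?_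
  have rfl_eq : x.1 + x.2 = m := Finset.HasAntidiagonal.mem_antidiagonal.mp hx
  by_cases h1 : ((x.1 : ℤ)) = (Multiplicative.toAdd g).down
  · have h2 : ((x.2 : ℤ)) ≠ (Multiplicative.toAdd h).down := by
      intro h2
      apply hm
      show (m : ℤ) = (Multiplicative.toAdd (g * h)).down
      have hdown : (Multiplicative.toAdd (g * h)).down
          = (Multiplicative.toAdd g).down + (Multiplicative.toAdd h).down := rfl
      rw [hdown, ← h1, ← h2, ← rfl_eq]
      push_cast
      ring
    rw [hq x.2 h2, mul_zero]
  · rw [hp x.1 h1, zero_mul]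

theorem pcomp_independent : iSupIndep (pcomp F) := by
  intro n
  rw [disjoint_iff_inf_le]
  set z := (Multiplicative.toAdd n).down with hz
  set K : Submodule F (Polynomial F) :=
    { carrier := {p | ∀ m : ℕ, (m : ℤ) = z → p.coeff m = 0}
      add_mem' := by intro p q hp hq m hm; simp [hp m hm, hq m hm]
      zero_mem' := by intro m hm; simp
      smul_mem' := by intro c p hp m hm; simp [hp m hm] } with hK
  have hle : (⨆ (j) (_ : j ≠ n), pcomp F j) ≤ K := by
    refine iSup_le fun j => iSup_le fun hj => ?_
    intro p hp m hm
    refine hp m ?_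
    intro e
    apply hj
    have : (Multiplicative.toAdd j).down = (Multiplicative.toAdd n).down := by
      rw [← e]; exact hm
    apply Multiplicative.toAdd.injective
    exact ULift.ext _ _ this
  intro p hp
  have h1 : p ∈ pcomp F n := hp.1
  have h2 : p ∈ K := hle hp.2
  have : p = 0 := by
    ext m
    by_cases hmz : (m : ℤ) = z
    · simpa using h2 m hmz
    · simpa using h1 m hmz
  simp [this]

theorem pcomp_spans : (⨆ n, pcomp F n) = ⊤ := by
  rw [eq_top_iff]
  intro p hptop
  clear hptop
  induction p using Polynomial.induction_on' with
  | add p q hp hq => exact Submodule.add_mem _ hp hq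
  | monomial k c =>
      exact Submodule.mem_iSup_of_mem (Multiplicative.ofAdd (ULift.up (k : ℤ)))
        (monomial_mem_pcomp k c)

theorem pcomp_eq {n : Multiplicative (ULift.{u} ℤ)} {p : Polynomial F}
    (hp : p ∈ pcomp F n) :
    (∃ k : ℕ, (k : ℤ) = (Multiplicative.toAdd n).down ∧ p = Polynomial.monomial k (p.coeff k))
    ∨ p = 0 := by
  set z := (Multiplicative.toAdd n).down with hz
  by_cases h0 : 0 ≤ z
  · left
    refine ⟨z.toNat, Int.toNat_of_nonneg h0, ?_⟩
    ext m
    rw [Polynomial.coeff_monomial]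
    by_cases hm : m = z.toNat
    · rw [if_pos hm.symm, hm]
    · rw [if_neg (Ne.symm hm)]
      refine hp m fun e => hm ?_
      rw [← hz] at e
      omega
  · right
    ext m
    simp only [Polynomial.coeff_zero]
    refine hp m fun e => ?_
    rw [← hz] at e
    omega

/-- Simple structure of `pcomp` elements. -/
theorem pcomp_cases {n : Multiplicative (ULift.{u} ℤ)} {p : Polynomial F}
    (hp : p ∈ pcomp F n) :
    p = 0 ∨ ∃ (k : ℕ) (c : F), p = Polynomial.monomial k c := by
  rcases pcomp_eq hp with ⟨k, _, hm⟩ | h0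
  · exact Or.inr ⟨k, p.coeff k, hm⟩
  · exact Or.inl h0

theorem mem_pcomp_forces {n : Multiplicative (ULift.{u} ℤ)} {k : ℕ} {c : F}
    (hp : (Polynomial.monomial k c) ∈ pcomp F n) (hc : c ≠ 0) :
    (k : ℤ) = (Multiplicative.toAdd n).down := by
  by_contra h
  have := hp k h
  rw [Polynomial.coeff_monomial, if_pos rfl] at this
  exact hc this

end Aux
section Aux2

open Polynomial

variable {F : Type u} [Field F]

/-- Polynomials with zero constant term: a non-unital subalgebra of `F[x]`. -/
def paug (F : Type u) [Field F] : NonUnitalSubalgebra F (Polynomial F) where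
  carrier := {p | p.coeff 0 = 0}
  add_mem' := by intro p q hp hq; simp_all [Polynomial.coeff_add]
  zero_mem' := by simp
  smul_mem' := by intro c p hp; simp_all [Polynomial.coeff_smul]
  mul_mem' := by intro p q hp hq; simp_all [Polynomial.mul_coeff_zero]

/-- The grading on `paug F` induced from `pcomp`. -/
def icomp (F : Type u) [Field F] (n : Multiplicative (ULift.{u} ℤ)) :
    Submodule F (paug F) where
  carrier := {p | (p : Polynomial F) ∈ pcomp F n}
  add_mem' := by intro p q hp hq; exact (pcomp F n).add_mem hp hq
  zero_mem' := (pcomp F n).zero_mem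
  smul_mem' := by intro c p hp; exact (pcomp F n).smul_mem c hp

theorem mem_icomp_iff {n : Multiplicative (ULift.{u} ℤ)} {p : paug F} :
    p ∈ icomp F n ↔ (p : Polynomial F) ∈ pcomp F n := Iff.rfl

theorem icomp_mul_mem : ∀ ⦃g h : Multiplicative (ULift.{u} ℤ)⦄ ⦃p q : paug F⦄,
    p ∈ icomp F g → q ∈ icomp F h → p * q ∈ icomp F (g * h) := by
  intro g h p q hp hq
  exact pcomp_mul_mem hp hq

theorem icomp_independent : iSupIndep (icomp F) := by
  intro n
  rw [disjoint_iff_inf_le]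
  set K : Submodule F (paug F) :=
    { carrier := {p | ∀ m : ℕ, (m : ℤ) = (Multiplicative.toAdd n).down →
        (p : Polynomial F).coeff m = 0}
      add_mem' := by intro p q hp hq m hm; simp [Polynomial.coeff_add, hp m hm, hq m hm]
      zero_mem' := by intro m hm; simp
      smul_mem' := by intro c p hp m hm; simp [Polynomial.coeff_smul, hp m hm] } with hK
  have hle : (⨆ (j) (_ : j ≠ n), icomp F j) ≤ K := by
    refine iSup_le fun j => iSup_le fun hj => ?_
    intro p hp m hm
    refine hp m ?_
    intro e
    apply hj
    apply Multiplicative.toAdd.injective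
    exact ULift.ext _ _ (by rw [← e]; exact hm)
  intro p hp
  have h1 : (p : Polynomial F) ∈ pcomp F n := hp.1
  have h2 : p ∈ K := hle hp.2
  have hp0 : p = 0 := by
    apply Subtype.ext
    show (p : Polynomial F) = 0
    ext m
    by_cases hmz : (m : ℤ) = (Multiplicative.toAdd n).down
    · simpa using h2 m hmz
    · simpa using h1 m hmz
  simp [hp0]

theorem icomp_spans : (⨆ n, icomp F n) = ⊤ := by
  classical
  rw [eq_top_iff]
  rintro p _
  -- write `p` as a sum of its monomials, each of which lies in `paug F`
  set mk : ℕ → paug F := fun k =>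
    ⟨Polynomial.monomial k ((p : Polynomial F).coeff k), by
      show (Polynomial.monomial k ((p : Polynomial F).coeff k)).coeff 0 = 0
      by_cases hk : k = 0
      · subst hk
        rw [Polynomial.coeff_monomial, if_pos rfl]
        exact p.2
      · rw [Polynomial.coeff_monomial, if_neg (by omega)]⟩ with hmk
  have hsum : p = ∑ k ∈ (p : Polynomial F).support, mk k := by
    apply Subtype.ext
    rw [AddSubmonoidClass.coe_finset_sum]
    exact (p : Polynomial F).as_sum_support
  rw [hsum]
  refine Submodule.sum_mem _ fun k _ => ?_
  exact Submodule.mem_iSup_of_mem (Multiplicative.ofAdd (ULift.up (k : ℤ)))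
    (monomial_mem_pcomp k _)

/-- The non-unital `GrAlg` object on `paug F` graded by `ℤ`. -/
noncomputable def Dna (F : Type u) [Field F] : GrAlg F where
  A := paug F
  G := Multiplicative (ULift.{u} ℤ)
  comp := icomp F
  mul_mem := icomp_mul_mem
  independent := icomp_independent
  spans := icomp_spans

/-! ### Evaluation homomorphisms via the unitization -/

theorem fst_aeval (X : GrAlg F) (a : X.A) (p : Polynomial F) :
    (Polynomial.aeval (↑a : Unitization F X.A) p).fst = p.coeff 0 := by
  have h := Polynomial.aeval_algHom_apply (Unitization.fstHom F X.A)
      (↑a : Unitization F X.A) p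
  have h2 : (Unitization.fstHom F X.A) (↑a : Unitization F X.A) = 0 :=
    Unitization.fst_inr F a
  rw [h2] at h
  rw [show (Polynomial.aeval (↑a : Unitization F X.A) p).fst
      = (Unitization.fstHom F X.A) (Polynomial.aeval (↑a : Unitization F X.A) p) from rfl,
    ← h]
  simp [Polynomial.coe_aeval_eq_eval, ← Polynomial.coeff_zero_eq_eval_zero]

theorem pow_fst (X : GrAlg F) (a : X.A) :
    ∀ k : ℕ, ((↑a : Unitization F X.A) ^ (k + 1)).fst = 0 := by
  intro k
  induction k with
  | zero => simpa using Unitization.fst_inr F a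
  | succ n ih => rw [pow_succ, Unitization.fst_mul, ih, zero_mul]

theorem pow_snd_succ (X : GrAlg F) (a : X.A) (k : ℕ) :
    ((↑a : Unitization F X.A) ^ (k + 2)).snd
      = ((↑a : Unitization F X.A) ^ (k + 1)).snd * a := by
  rw [pow_succ, Unitization.snd_mul, pow_fst, Unitization.fst_inr, Unitization.snd_inr]
  simp

theorem pow_snd_mem (X : GrAlg F) {a : X.A} {g0 : X.G} (ha : a ∈ X.comp g0) :
    ∀ k : ℕ, ((↑a : Unitization F X.A) ^ (k + 1)).snd ∈ X.comp (g0 ^ (k + 1)) := by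
  intro k
  induction k with
  | zero => simpa using ha
  | succ n ih =>
      rw [pow_snd_succ, pow_succ g0]
      exact X.mul_mem ih ha

theorem pow_snd_f {X Y : GrAlg F} (f : GrAlgHom X Y) {a b : X.A}
    (hab : f.hom a = f.hom b) :
    ∀ k : ℕ, f.hom (((↑a : Unitization F X.A) ^ (k + 1)).snd)
      = f.hom (((↑b : Unitization F X.A) ^ (k + 1)).snd) := by
  intro k
  induction k with
  | zero => simpa using hab
  | succ n ih => rw [pow_snd_succ, pow_snd_succ, map_mul, map_mul, ih, hab]

/-- Non-unital evaluation of a zero-constant-term polynomial at `a`. -/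
noncomputable def evHom (X : GrAlg F) (a : X.A) : paug F →ₙₐ[F] X.A where
  toFun p := (Polynomial.aeval (↑a : Unitization F X.A) (p : Polynomial F)).snd
  map_add' p q := by
    show (Polynomial.aeval (↑a : Unitization F X.A)
      ((p : Polynomial F) + (q : Polynomial F))).snd = _
    rw [map_add, Unitization.snd_add]
  map_smul' c p := by
    show (Polynomial.aeval (↑a : Unitization F X.A) (c • (p : Polynomial F))).snd = _
    rw [map_smul, Unitization.snd_smul]
    rfl
  map_zero' := by
    show (Polynomial.aeval (↑a : Unitization F X.A) (0 : Polynomial F)).snd = _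
    rw [map_zero, Unitization.snd_zero]
  map_mul' p q := by
    show (Polynomial.aeval (↑a : Unitization F X.A)
      ((p : Polynomial F) * (q : Polynomial F))).snd = _
    rw [map_mul, Unitization.snd_mul, fst_aeval, fst_aeval, p.2, q.2]
    simp

theorem evHom_coe_monomial (X : GrAlg F) (a : X.A) (p : paug F) (k : ℕ) (c : F)
    (hp : (p : Polynomial F) = Polynomial.monomial k c) :
    evHom X a p = c • ((↑a : Unitization F X.A) ^ k).snd := by
  show (Polynomial.aeval (↑a : Unitization F X.A) (p : Polynomial F)).snd = _
  rw [hp, Polynomial.aeval_monomial]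
  rw [Unitization.algebraMap_eq_inl, Unitization.snd_mul]
  simp

/-- Structure of elements of `icomp`. -/
theorem icomp_cases {n : Multiplicative (ULift.{u} ℤ)} {p : paug F}
    (hp : p ∈ icomp F n) :
    p = 0 ∨ ∃ (k : ℕ) (c : F), c ≠ 0 ∧ (k : ℤ) = (Multiplicative.toAdd n).down ∧ 1 ≤ k ∧
      (p : Polynomial F) = Polynomial.monomial k c := by
  rcases pcomp_cases (mem_icomp_iff.mp hp) with h0 | ⟨k, c, hm⟩
  · exact Or.inl (Subtype.ext h0)
  · by_cases hc : c = 0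
    · subst hc
      exact Or.inl (Subtype.ext (by simpa using hm))
    · have hk : (k : ℤ) = (Multiplicative.toAdd n).down :=
        mem_pcomp_forces (hm ▸ (mem_icomp_iff.mp hp)) hc
      have hk1 : 1 ≤ k := by
        by_contra h
        have hk0 : k = 0 := by omega
        subst hk0
        have h2 : (p : Polynomial F).coeff 0 = 0 := p.2
        rw [hm] at h2
        rw [Polynomial.coeff_monomial] at h2
        simp at h2
        exact hc h2
      exact Or.inr ⟨k, c, hc, hk, hk1, hm⟩

theorem evHom_mem (X : GrAlg F) {a : X.A} {g0 : X.G} (ha : a ∈ X.comp g0)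
    (n : Multiplicative (ULift.{u} ℤ)) :
    ∀ p ∈ icomp F n, evHom X a p ∈
      X.comp (if (Multiplicative.toAdd n).down ≤ 0 then 1
        else g0 ^ (Multiplicative.toAdd n).down.toNat) := by
  intro p hp
  rcases icomp_cases hp with rfl | ⟨k, c, hc, hk, hk1, hm⟩
  · rw [map_zero]; exact Submodule.zero_mem _
  · rw [evHom_coe_monomial X a p k c hm]
    rw [if_neg (by omega)]
    have hkt : (Multiplicative.toAdd n).down.toNat = k := by omega
    rw [hkt]
    obtain ⟨j, rfl⟩ : ∃ j, k = j + 1 := ⟨k - 1, by omega⟩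
    exact Submodule.smul_mem _ c (pow_snd_mem X ha j)

end Aux2
section Aux3

open Polynomial

variable {F : Type u} [Field F]

/-- The unital `GrAlgOne` object on `F[x]` graded by `ℤ`. -/
noncomputable def DOne (F : Type u) [Field F] : GrAlgOne F where
  A := Polynomial F
  G := Multiplicative (ULift.{u} ℤ)
  comp := pcomp F
  mul_mem := pcomp_mul_mem
  independent := pcomp_independent
  spans := pcomp_spans
  one := 1
  one_mul := _root_.one_mul
  mul_one := _root_.mul_one

set_option maxRecDepth 4000 in
/-- Unital evaluation of a polynomial at `a`, via the unitization. -/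
noncomputable def evOneHom (X : GrAlgOne F) (a : X.A) : Polynomial F →ₙₐ[F] X.A where
  toFun p := (Polynomial.aeval (↑a : Unitization F X.A) p).fst • X.one +
             (Polynomial.aeval (↑a : Unitization F X.A) p).snd
  map_add' p q := by
    rw [map_add, Unitization.fst_add, Unitization.snd_add, add_smul]
    abel
  map_smul' c p := by
    rw [map_smul, Unitization.fst_smul, Unitization.snd_smul, smul_add, smul_smul,
      smul_eq_mul]
    rfl
  map_zero' := by
    rw [map_zero, Unitization.fst_zero, Unitization.snd_zero, zero_smul, add_zero]
  map_mul' p q := by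
    rw [map_mul]
    simp only [Unitization.fst_mul, Unitization.snd_mul, add_mul, mul_add, smul_add,
      smul_mul_assoc, mul_smul_comm, X.one_mul, X.mul_one]
    rw [smul_smul, mul_comm ((Polynomial.aeval (↑a : Unitization F X.A)) q).fst]
    abel

theorem evOneHom_monomial (X : GrAlgOne F) (a : X.A) (k : ℕ) (c : F) :
    evOneHom X a (Polynomial.monomial k c) =
      if k = 0 then c • X.one else c • ((↑a : Unitization F X.A) ^ k).snd := by
  show (Polynomial.aeval (↑a : Unitization F X.A) (Polynomial.monomial k c)).fst • X.one +
      (Polynomial.aeval (↑a : Unitization F X.A) (Polynomial.monomial k c)).snd = _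
  rw [Polynomial.aeval_monomial, Unitization.algebraMap_eq_inl]
  by_cases hk : k = 0
  · subst hk
    rw [if_pos rfl]
    simp
  · rw [if_neg hk]
    obtain ⟨j, rfl⟩ : ∃ j, k = j + 1 := ⟨k - 1, by omega⟩
    rw [Unitization.fst_mul, Unitization.snd_mul]
    simp [pow_fst X.toGrAlg a j]

theorem evOneHom_mem (X : GrAlgOne F) {a : X.A} {g0 : X.G} (ha : a ∈ X.comp g0)
    (n : Multiplicative (ULift.{u} ℤ)) :
    ∀ p ∈ pcomp F n, evOneHom X a p ∈
      X.comp (if (Multiplicative.toAdd n).down ≤ 0 then 1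
        else g0 ^ (Multiplicative.toAdd n).down.toNat) := by
  intro p hp
  rcases pcomp_eq hp with ⟨k, hk, hm⟩ | rfl
  · set c := p.coeff k with hc
    rw [hm, evOneHom_monomial]
    by_cases hk0 : k = 0
    · subst hk0
      rw [if_pos rfl, if_pos (by omega)]
      exact Submodule.smul_mem _ c (GrAlgOne.one_mem X)
    · rw [if_neg hk0, if_neg (by omega)]
      have hkt : (Multiplicative.toAdd n).down.toNat = k := by omega
      rw [hkt]
      obtain ⟨j, rfl⟩ : ∃ j, k = j + 1 := ⟨k - 1, by omega⟩
      exact Submodule.smul_mem _ c (pow_snd_mem X.toGrAlg ha j)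
  · rw [map_zero]
    exact Submodule.zero_mem _

/-- A non-unital algebra hom as a linear map. -/
def nuaToLinear {A B : Type u} [NonUnitalRing A] [Module F A] [NonUnitalRing B]
    [Module F B] (f : A →ₙₐ[F] B) : A →ₗ[F] B where
  toFun := f
  map_add' := map_add f
  map_smul' := map_smul f

theorem agree_on_all (X : GrAlg F) {M : Type u} [AddCommGroup M] [Module F M]
    (φ ψ : X.A →ₗ[F] M)
    (h : ∀ g : X.G, ∀ d ∈ X.comp g, φ d = ψ d) : ∀ d, φ d = ψ d := by
  intro d
  have hle : (⊤ : Submodule F X.A) ≤ LinearMap.eqLocus φ ψ := by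
    rw [← X.spans]
    exact iSup_le fun g x hx => h g x hx
  exact hle Submodule.mem_top

theorem f_ev_eq {X Y : GrAlg F} (f : GrAlgHom X Y) {a b : X.A}
    (hab : f.hom a = f.hom b) (p : paug F) :
    f.hom (evHom X a p) = f.hom (evHom X b p) := by
  refine agree_on_all (Dna F) (nuaToLinear (f.hom.comp (evHom X a)))
    (nuaToLinear (f.hom.comp (evHom X b))) ?_ p
  intro n q hq
  show f.hom (evHom X a q) = f.hom (evHom X b q)
  rcases icomp_cases hq with rfl | ⟨k, c, hc, hk, hk1, hm⟩
  · simp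
  · obtain ⟨j, rfl⟩ : ∃ j, k = j + 1 := ⟨k - 1, by omega⟩
    rw [evHom_coe_monomial X a q _ c hm, evHom_coe_monomial X b q _ c hm,
      map_smul, map_smul, pow_snd_f f hab j]

theorem f_ev_eq_one {X Y : GrAlgOne F} (f : GrAlgOneHom X Y) {a b : X.A}
    (hab : f.hom a = f.hom b) (p : Polynomial F) :
    f.hom (evOneHom X a p) = f.hom (evOneHom X b p) := by
  refine agree_on_all (DOne F).toGrAlg (nuaToLinear (f.hom.comp (evOneHom X a)))
    (nuaToLinear (f.hom.comp (evOneHom X b))) ?_ p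
  intro n q hq
  show f.hom (evOneHom X a q) = f.hom (evOneHom X b q)
  rcases pcomp_cases hq with rfl | ⟨k, c, hm⟩
  · simp
  · subst hm
    rw [evOneHom_monomial, evOneHom_monomial]
    by_cases hk : k = 0
    · rw [if_pos hk, if_pos hk]
    · rw [if_neg hk, if_neg hk]
      obtain ⟨j, rfl⟩ : ∃ j, k = j + 1 := ⟨k - 1, by omega⟩
      rw [map_smul, map_smul, pow_snd_f f.toGrAlgHom hab j]

/-- The generator `x` as an element of `paug F`. -/
noncomputable def xElt (F : Type u) [Field F] : paug F :=
  ⟨Polynomial.X, by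
    show (Polynomial.X : Polynomial F).coeff 0 = 0
    simp⟩

theorem evHom_xElt (X : GrAlg F) (a : X.A) : evHom X a (xElt F) = a := by
  show (Polynomial.aeval (↑a : Unitization F X.A) (Polynomial.X : Polynomial F)).snd = a
  rw [Polynomial.aeval_X, Unitization.snd_inr]

theorem evOneHom_X (X : GrAlgOne F) (a : X.A) : evOneHom X a Polynomial.X = a := by
  show (Polynomial.aeval (↑a : Unitization F X.A) (Polynomial.X : Polynomial F)).fst • X.one +
      (Polynomial.aeval (↑a : Unitization F X.A) (Polynomial.X : Polynomial F)).snd = a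
  rw [Polynomial.aeval_X, Unitization.snd_inr, Unitization.fst_inr, zero_smul, zero_add]

theorem evOneHom_one (X : GrAlgOne F) (a : X.A) : evOneHom X a 1 = X.one := by
  show (Polynomial.aeval (↑a : Unitization F X.A) (1 : Polynomial F)).fst • X.one +
      (Polynomial.aeval (↑a : Unitization F X.A) (1 : Polynomial F)).snd = X.one
  rw [map_one, Unitization.fst_one, Unitization.snd_one, one_smul, add_zero]

end Aux3
section Statement

variable (F)

/-- `f` is a monomorphism in `GrAlg_F`. -/
def IsMonoGrAlg {X Y : GrAlg F} (f : GrAlgHom X Y) : Prop :=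
  ∀ (D : GrAlg F) (α β : GrAlgHom D X), f.comp α = f.comp β → α = β

/-- `f` is a monomorphism in `GrAlg¹_F`. -/
def IsMonoGrAlgOne {X Y : GrAlgOne F} (f : GrAlgOneHom X Y) : Prop :=
  ∀ (D : GrAlgOne F) (α β : GrAlgOneHom D X), f.comp α = f.comp β → α = β

theorem mono_of_inj_na {X Y : GrAlg F} (f : GrAlgHom X Y)
    (h : ∀ a b : X.A, (∃ g, a ∈ X.comp g) → (∃ g, b ∈ X.comp g) → a ≠ b →
      f.hom a ≠ f.hom b) :
    IsMonoGrAlg F f := by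
  intro D α β hαβ
  have hcomp : ∀ d : D.A, f.hom (α.hom d) = f.hom (β.hom d) := by
    intro d
    have h1 : (f.comp α).hom d = (f.comp β).hom d :=
      DFunLike.congr_fun (congrArg GrAlgHom.hom hαβ) d
    exact h1
  have hagree : ∀ d, α.hom d = β.hom d := by
    refine agree_on_all D (nuaToLinear α.hom) (nuaToLinear β.hom) ?_
    intro g d hd
    obtain ⟨h1, hh1⟩ := α.graded g
    obtain ⟨h2, hh2⟩ := β.graded g
    show α.hom d = β.hom d
    by_contra hne
    exact h _ _ ⟨h1, hh1 d hd⟩ ⟨h2, hh2 d hd⟩ hne (hcomp d)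
  exact GrAlgHom.ext (DFunLike.ext _ _ hagree)

theorem mono_of_inj_one {X Y : GrAlgOne F} (f : GrAlgOneHom X Y)
    (h : ∀ a b : X.A, (∃ g, a ∈ X.comp g) → (∃ g, b ∈ X.comp g) → a ≠ b →
      f.hom a ≠ f.hom b) :
    IsMonoGrAlgOne F f := by
  intro D α β hαβ
  have hcomp : ∀ d : D.A, f.hom (α.hom d) = f.hom (β.hom d) := by
    intro d
    have h1 : (f.comp α).hom d = (f.comp β).hom d :=
      DFunLike.congr_fun (congrArg (fun m => m.toGrAlgHom.hom) hαβ) d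
    exact h1
  have hagree : ∀ d, α.hom d = β.hom d := by
    refine agree_on_all D.toGrAlg (nuaToLinear α.hom) (nuaToLinear β.hom) ?_
    intro g d hd
    obtain ⟨h1, hh1⟩ := α.graded g
    obtain ⟨h2, hh2⟩ := β.graded g
    show α.hom d = β.hom d
    by_contra hne
    exact h _ _ ⟨h1, hh1 d hd⟩ ⟨h2, hh2 d hd⟩ hne (hcomp d)
  exact GrAlgOneHom.ext (DFunLike.ext _ _ hagree)

theorem inj_of_mono_na {X Y : GrAlg F} (f : GrAlgHom X Y) (hm : IsMonoGrAlg F f) :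
    ∀ a b : X.A, (∃ g, a ∈ X.comp g) → (∃ g, b ∈ X.comp g) → a ≠ b →
      f.hom a ≠ f.hom b := by
  rintro a b ⟨g0, hg0⟩ ⟨h0, hh0⟩ hab hfab
  let α : GrAlgHom (Dna F) X :=
    { hom := evHom X a, graded := fun n => ⟨_, evHom_mem X hg0 n⟩ }
  let β : GrAlgHom (Dna F) X :=
    { hom := evHom X b, graded := fun n => ⟨_, evHom_mem X hh0 n⟩ }
  have hc : f.comp α = f.comp β := by
    refine GrAlgHom.ext (DFunLike.ext _ _ fun p => ?_)
    show f.hom (evHom X a p) = f.hom (evHom X b p)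
    exact f_ev_eq f hfab p
  have heq := hm (Dna F) α β hc
  apply hab
  have h2 : evHom X a (xElt F) = evHom X b (xElt F) :=
    DFunLike.congr_fun (congrArg GrAlgHom.hom heq) (xElt F)
  rwa [evHom_xElt, evHom_xElt] at h2

theorem inj_of_mono_one {X Y : GrAlgOne F} (f : GrAlgOneHom X Y)
    (hm : IsMonoGrAlgOne F f) :
    ∀ a b : X.A, (∃ g, a ∈ X.comp g) → (∃ g, b ∈ X.comp g) → a ≠ b →
      f.hom a ≠ f.hom b := by
  rintro a b ⟨g0, hg0⟩ ⟨h0, hh0⟩ hab hfab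
  let α : GrAlgOneHom (DOne F) X :=
    { toGrAlgHom := { hom := evOneHom X a, graded := fun n => ⟨_, evOneHom_mem X hg0 n⟩ },
      map_one := evOneHom_one X a }
  let β : GrAlgOneHom (DOne F) X :=
    { toGrAlgHom := { hom := evOneHom X b, graded := fun n => ⟨_, evOneHom_mem X hh0 n⟩ },
      map_one := evOneHom_one X b }
  have hc : f.comp α = f.comp β := by
    refine GrAlgOneHom.ext (DFunLike.ext _ _ fun p => ?_)
    show f.hom (evOneHom X a p) = f.hom (evOneHom X b p)
    exact f_ev_eq_one f hfab p
  have heq := hm (DOne F) α β hc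
  apply hab
  have h2 : evOneHom X a Polynomial.X = evOneHom X b Polynomial.X :=
    DFunLike.congr_fun
      (congrArg (fun m : GrAlgOneHom (DOne F) X => m.hom) heq) Polynomial.X
  rwa [evOneHom_X, evOneHom_X] at h2

/-- A morphism `f : A → B` in `GrAlg_F` (resp. `GrAlg¹_F`) is a monomorphism if and only
if it is injective on the set of homogeneous elements; in particular, every monomorphism
is graded injective. -/
theorem mono_iff_injective_on_homogeneous (F : Type u) [Field F] :
    (∀ (X Y : GrAlg F) (f : GrAlgHom X Y),
      (IsMonoGrAlg F f ↔
        ∀ a b : X.A, (∃ g, a ∈ X.comp g) → (∃ g, b ∈ X.comp g) → a ≠ b →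
          f.hom a ≠ f.hom b)
      ∧ (IsMonoGrAlg F f → ∀ g : X.G, Set.InjOn f.hom (X.comp g)))
    ∧
    (∀ (X Y : GrAlgOne F) (f : GrAlgOneHom X Y),
      (IsMonoGrAlgOne F f ↔
        ∀ a b : X.A, (∃ g, a ∈ X.comp g) → (∃ g, b ∈ X.comp g) → a ≠ b →
          f.hom a ≠ f.hom b)
      ∧ (IsMonoGrAlgOne F f → ∀ g : X.G, Set.InjOn f.hom (X.comp g))) := by
  constructor
  · intro X Y f
    refine ⟨⟨fun hm => inj_of_mono_na F f hm, fun h => mono_of_inj_na F f h⟩, ?_⟩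
    intro hm g x hx y hy hfe
    by_contra hne
    exact inj_of_mono_na F f hm x y ⟨g, hx⟩ ⟨g, hy⟩ hne hfe
  · intro X Y f
    refine ⟨⟨fun hm => inj_of_mono_one F f hm, fun h => mono_of_inj_one F f h⟩, ?_⟩
    intro hm g x hx y hy hfe
    by_contra hne
    exact inj_of_mono_one F f hm x y ⟨g, hx⟩ ⟨g, hy⟩ hne hfe

end Statement
end

section
/- Let G and H be groups and let F be a field. Then the coproduct of the group algebras FG and FH (each with its standard grading) in the category tilde{GrAlg_F} does not exist. -/
set_option autoImplicit false

universe u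

variable {F : Type u} [Field F]

/-! The group algebra `FG` with its standard grading, as an object of our categories. -/

lemma stdComp_eq {F : Type u} [Field F] {G : Type u} [Group G] (g : G) :
    Submodule.span F {MonoidAlgebra.single g 1} =
      LinearMap.range (MonoidAlgebra.lsingle g : F →ₗ[F] MonoidAlgebra F G) := by
  apply le_antisymm
  · rw [Submodule.span_le]
    intro x hx
    rw [Set.mem_singleton_iff] at hx
    subst hx
    exact ⟨1, by simp [MonoidAlgebra.lsingle_apply]⟩
  · rintro x ⟨c, rfl⟩
    rw [Submodule.mem_span_singleton]
    exact ⟨c, by simp [MonoidAlgebra.lsingle_apply]⟩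

/-- The group algebra `FG` with its standard grading `FG = ⊕_{g ∈ G} F·u_g`. -/
noncomputable def grpAlg (F : Type u) [Field F] (G : Type u) [Group G] : GrAlg F where
  A := MonoidAlgebra F G
  G := G
  comp g := Submodule.span F {MonoidAlgebra.single g 1}
  mul_mem := by
    intro g h a b ha hb
    rw [Submodule.mem_span_singleton] at ha hb ⊢
    obtain ⟨c, rfl⟩ := ha
    obtain ⟨d, rfl⟩ := hb
    refine ⟨c * d, ?_⟩
    rw [smul_mul_assoc, mul_smul_comm, MonoidAlgebra.single_mul_single, one_mul, smul_smul]
  independent := by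
    have hF : iSupIndep (fun g : G => LinearMap.range (Finsupp.lsingle g : F →ₗ[F] (G →₀ F))) := by
     intro g
     have key := Finsupp.disjoint_lsingle_lsingle ({g} : Set G) ({g}ᶜ : Set G)
       disjoint_compl_right (M := F) (R := F)
     have h1 : (⨆ a ∈ ({g} : Set G), LinearMap.range (Finsupp.lsingle a : F →ₗ[F] (G →₀ F)))
         = LinearMap.range (Finsupp.lsingle g : F →ₗ[F] (G →₀ F)) := by simp
     have h2 : (⨆ a ∈ ({g}ᶜ : Set G), LinearMap.range (Finsupp.lsingle a : F →ₗ[F] (G →₀ F)))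
         = ⨆ h, ⨆ _ : h ≠ g, LinearMap.range (Finsupp.lsingle h : F →ₗ[F] (G →₀ F)) := by
       simp [Set.mem_compl_iff]
     rw [h1, h2] at key
     exact key
    have hc : ∀ g : G, Submodule.span F {MonoidAlgebra.single g (1 : F)} =
        Submodule.map (MonoidAlgebra.coeffLinearEquiv F : MonoidAlgebra F G ≃ₗ[F] (G →₀ F)).symm.toLinearMap
          (LinearMap.range (Finsupp.lsingle g : F →ₗ[F] (G →₀ F))) := by
      intro g
      rw [stdComp_eq, MonoidAlgebra.lsingle, LinearMap.range_comp]
    simp only [hc]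
    exact hF.map_orderIso (Submodule.orderIsoMapComap
      (MonoidAlgebra.coeffLinearEquiv F : MonoidAlgebra F G ≃ₗ[F] (G →₀ F)).symm)
  spans := by
    simp only [stdComp_eq, MonoidAlgebra.lsingle, LinearMap.range_comp]
    rw [← Submodule.map_iSup, Finsupp.iSup_lsingle_range, Submodule.map_top]
    exact LinearMap.range_eq_top.mpr (LinearEquiv.surjective _)

/-- The group algebra `FG` with its standard grading, as an object of `GrAlg¹_F`. -/
noncomputable def grpAlgOne (F : Type u) [Field F] (G : Type u) [Group G] : GrAlgOne F :=
  GrAlgOne.mk (grpAlg F G) (1 : MonoidAlgebra F G)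
    (fun (a : MonoidAlgebra F G) => one_mul a) (fun (a : MonoidAlgebra F G) => mul_one a)

section Aux

/-- The augmentation map as a non-unital algebra homomorphism. -/
noncomputable def augN (G : Type u) [Group G] : MonoidAlgebra F G →ₙₐ[F] F :=
  ((MonoidAlgebra.lift F F G) 1).toNonUnitalAlgHom

lemma augN_single (G : Type u) [Group G] (g : G) :
    augN (F := F) G (MonoidAlgebra.single g (1 : F)) = 1 := by
  show ((MonoidAlgebra.lift F F G) 1) (MonoidAlgebra.single g (1 : F)) = 1
  simp

/-- A linear-algebra helper: any `F`-algebra map is injective on a spanned line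
provided it does not kill the generator. -/
lemma injOn_span_single {G : Type u} [Group G] {B : Type u} [NonUnitalRing B] [Module F B]
    [SMulCommClass F B B] [IsScalarTower F B B] [NoZeroSMulDivisors F B]
    (φ : MonoidAlgebra F G →ₙₐ[F] B) (g : G) (hφ : φ (MonoidAlgebra.single g (1 : F)) ≠ 0) :
    Set.InjOn φ (Submodule.span F {MonoidAlgebra.single g (1 : F)}) := by
  intro x hx y hy hxy
  rw [SetLike.mem_coe, Submodule.mem_span_singleton] at hx hy
  obtain ⟨c, rfl⟩ := hx
  obtain ⟨d, rfl⟩ := hy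
  rw [map_smul, map_smul] at hxy
  rw [smul_left_injective F hφ hxy]

/-- `F × F` with the trivial grading by the trivial group. -/
noncomputable def sqF (F : Type u) [Field F] : GrAlg F where
  A := F × F
  G := PUnit
  comp _ := ⊤
  mul_mem _ _ _ _ _ _ := Submodule.mem_top
  independent := by
    intro i
    have h : (⨆ j, ⨆ (_ : j ≠ i), (fun _ : PUnit.{u+1} => (⊤ : Submodule F (F × F))) j) = ⊥ := by
      refine iSup_eq_bot.mpr fun j => iSup_eq_bot.mpr fun hj => ?_
      exact absurd (Subsingleton.elim j i) hj
    rw [h]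
    exact disjoint_bot_right
  spans := by
    rw [eq_top_iff]
    exact le_iSup (fun _ : PUnit.{u+1} => (⊤ : Submodule F (F × F))) PUnit.unit

lemma inl_augN_single (G : Type u) [Group G] (g : G) :
    ((NonUnitalAlgHom.inl F F F).comp (augN G)) (MonoidAlgebra.single g (1 : F))
      = ((1 : F), (0 : F)) := by
  rw [NonUnitalAlgHom.comp_apply, augN_single, NonUnitalAlgHom.inl_apply]

lemma inr_augN_single (G : Type u) [Group G] (g : G) :
    ((NonUnitalAlgHom.inr F F F).comp (augN G)) (MonoidAlgebra.single g (1 : F))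
      = ((0 : F), (1 : F)) := by
  rw [NonUnitalAlgHom.comp_apply, augN_single, NonUnitalAlgHom.inr_apply]

/-- The augmentation into the first factor, as a graded injective homomorphism. -/
noncomputable def intoFst (G : Type u) [Group G] : TGrAlgHom (grpAlg F G) (sqF F) where
  hom := (NonUnitalAlgHom.inl F F F).comp (augN G)
  graded _ := ⟨PUnit.unit, fun _ _ => (Submodule.mem_top : _ ∈ (⊤ : Submodule F (F × F)))⟩
  injOn g := injOn_span_single _ g (by
    show ((NonUnitalAlgHom.inl F F F).comp (augN G)) (MonoidAlgebra.single g (1 : F)) ≠ 0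
    rw [inl_augN_single G g]
    exact fun h => one_ne_zero (congrArg Prod.fst h))

/-- The augmentation into the second factor, as a graded injective homomorphism. -/
noncomputable def intoSnd (G : Type u) [Group G] : TGrAlgHom (grpAlg F G) (sqF F) where
  hom := (NonUnitalAlgHom.inr F F F).comp (augN G)
  graded _ := ⟨PUnit.unit, fun _ _ => (Submodule.mem_top : _ ∈ (⊤ : Submodule F (F × F)))⟩
  injOn g := injOn_span_single _ g (by
    show ((NonUnitalAlgHom.inr F F F).comp (augN G)) (MonoidAlgebra.single g (1 : F)) ≠ 0
    rw [inr_augN_single G g]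
    exact fun h => one_ne_zero (congrArg Prod.snd h))

lemma intoFst_hom_single (G : Type u) [Group G] (g : G) :
    (intoFst (F := F) G).hom (MonoidAlgebra.single g (1 : F)) = ((1 : F), (0 : F)) :=
  inl_augN_single G g

lemma intoSnd_hom_single (G : Type u) [Group G] (g : G) :
    (intoSnd (F := F) G).hom (MonoidAlgebra.single g (1 : F)) = ((0 : F), (1 : F)) :=
  inr_augN_single G g

/-- In any `GrAlg`, a nonzero homogeneous idempotent lies in the identity component. -/
lemma idemp_comp_one (C : GrAlg F) {a : C.G} {e : C.A} (he : e ∈ C.comp a)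
    (hid : e * e = e) (hne : e ≠ 0) : a = 1 := by
  have hee : e ∈ C.comp (a * a) := by
    rw [← hid]
    exact C.mul_mem he he
  by_contra hne1
  have haa : a * a ≠ a := fun h => hne1 (mul_left_cancel (a := a) (by rw [mul_one]; exact h))
  exact hne (Submodule.disjoint_def.mp (C.independent.pairwiseDisjoint haa) e hee he)

end Aux

section Statement

/-- The coproduct of the group algebras `FG` and `FH` (with their standard gradings) in
the category `tilde{GrAlg_F}` does not exist. -/
theorem no_coproduct_of_group_algebras (F : Type u) [Field F]
    (G H : Type u) [Group G] [Group H] :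
    ¬ ∃ (C : GrAlg F) (i : TGrAlgHom (grpAlg F G) C) (j : TGrAlgHom (grpAlg F H) C),
        ∀ (D : GrAlg F) (α : TGrAlgHom (grpAlg F G) D) (β : TGrAlgHom (grpAlg F H) D),
          ∃! ψ : TGrAlgHom C D, ψ.comp i = α ∧ ψ.comp j = β := by
  rintro ⟨C, i, j, huniv⟩
  obtain ⟨a, ha⟩ := i.graded 1
  obtain ⟨b, hb⟩ := j.graded 1
  set eG : MonoidAlgebra F G := MonoidAlgebra.single 1 1 with heG
  set eH : MonoidAlgebra F H := MonoidAlgebra.single 1 1 with heH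
  have heGmem : eG ∈ (grpAlg F G).comp 1 := Submodule.mem_span_singleton_self _
  have heHmem : eH ∈ (grpAlg F H).comp 1 := Submodule.mem_span_singleton_self _
  have he : i.hom eG ∈ C.comp a := ha _ heGmem
  have hf : j.hom eH ∈ C.comp b := hb _ heHmem
  have hene : i.hom eG ≠ 0 := by
    intro h
    have h0 : (0 : MonoidAlgebra F G) ∈ (grpAlg F G).comp 1 := zero_mem _
    have := i.injOn 1 heGmem h0 (by rw [h]; exact (map_zero i.hom).symm)
    exact one_ne_zero (MonoidAlgebra.single_eq_zero.mp this)
  have hfne : j.hom eH ≠ 0 := by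
    intro h
    have h0 : (0 : MonoidAlgebra F H) ∈ (grpAlg F H).comp 1 := zero_mem _
    have := j.injOn 1 heHmem h0 (by rw [h]; exact (map_zero j.hom).symm)
    exact one_ne_zero (MonoidAlgebra.single_eq_zero.mp this)
  have hidG : i.hom eG * i.hom eG = i.hom eG := by
    refine (map_mul i.hom eG eG).symm.trans ?_
    congr 1
    rw [heG, show (MonoidAlgebra.single (1 : G) (1 : F)) * (MonoidAlgebra.single (1 : G) (1 : F))
        = MonoidAlgebra.single ((1 : G) * 1) ((1 : F) * 1) from MonoidAlgebra.single_mul_single ..,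
      mul_one, mul_one]
  have hidH : j.hom eH * j.hom eH = j.hom eH := by
    refine (map_mul j.hom eH eH).symm.trans ?_
    congr 1
    rw [heH, show (MonoidAlgebra.single (1 : H) (1 : F)) * (MonoidAlgebra.single (1 : H) (1 : F))
        = MonoidAlgebra.single ((1 : H) * 1) ((1 : F) * 1) from MonoidAlgebra.single_mul_single ..,
      mul_one, mul_one]
  have ha1 : a = 1 := idemp_comp_one C he hidG hene
  have hb1 : b = 1 := idemp_comp_one C hf hidH hfne
  rw [ha1] at he
  rw [hb1] at hf
  -- First target: both augmentations land in the first factor of `F × F`;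
  -- graded injectivity on the identity component forces `i(u_1) = j(u_1)`.
  obtain ⟨ψ₁, ⟨hψ₁i, hψ₁j⟩, -⟩ := huniv (sqF F) (intoFst G) (intoFst H)
  have hval₁G : ψ₁.hom (i.hom eG) = ((1 : F), (0 : F)) := by
    calc ψ₁.hom (i.hom eG) = (ψ₁.comp i).hom eG := rfl
      _ = (intoFst G).hom eG := by rw [hψ₁i]
      _ = @id (sqF F).A ((1 : F), (0 : F)) := intoFst_hom_single G 1
  have hval₁H : ψ₁.hom (j.hom eH) = ((1 : F), (0 : F)) := by
    calc ψ₁.hom (j.hom eH) = (ψ₁.comp j).hom eH := rfl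
      _ = (intoFst H).hom eH := by rw [hψ₁j]
      _ = @id (sqF F).A ((1 : F), (0 : F)) := intoFst_hom_single H 1
  have hef : i.hom eG = j.hom eH := ψ₁.injOn 1 he hf (by rw [hval₁G, hval₁H])
  -- Second target: the augmentations land in different factors, contradicting `i(u_1) = j(u_1)`.
  obtain ⟨ψ₂, ⟨hψ₂i, hψ₂j⟩, -⟩ := huniv (sqF F) (intoFst G) (intoSnd H)
  have hval₂G : ψ₂.hom (i.hom eG) = ((1 : F), (0 : F)) := by
    calc ψ₂.hom (i.hom eG) = (ψ₂.comp i).hom eG := rfl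
      _ = (intoFst G).hom eG := by rw [hψ₂i]
      _ = @id (sqF F).A ((1 : F), (0 : F)) := intoFst_hom_single G 1
  have hval₂H : ψ₂.hom (j.hom eH) = ((0 : F), (1 : F)) := by
    calc ψ₂.hom (j.hom eH) = (ψ₂.comp j).hom eH := rfl
      _ = (intoSnd H).hom eH := by rw [hψ₂j]
      _ = @id (sqF F).A ((0 : F), (1 : F)) := intoSnd_hom_single H 1
  have hcontra : ((1 : F), (0 : F)) = ((0 : F), (1 : F)) := by
    rw [← hval₂G, ← hval₂H, hef]
  exact one_ne_zero (congrArg Prod.fst hcontra)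

end Statement
end

section
/- For every field F, the universal grading group functor R : tilde{GrAlg_F} → Grp has no left adjoint. -/
set_option autoImplicit false

universe u

variable {F : Type u} [Field F]

/-- The defining relations of the universal group of a grading: the words
`[g][h][gh]⁻¹` for `g, h` in the support with `A^(g)·A^(h) ≠ 0`. -/
def GrAlg.univRels (X : GrAlg F) : Set (FreeGroup X.supp) :=
  { w | ∃ (g h : X.supp) (hgh : g.1 * h.1 ∈ X.supp),
      (∃ a ∈ X.comp g.1, ∃ b ∈ X.comp h.1, a * b ≠ 0) ∧
      w = FreeGroup.of g * FreeGroup.of h *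
          (FreeGroup.of (⟨g.1 * h.1, hgh⟩ : X.supp))⁻¹ }

/-- The universal group of a grading, presented as the quotient of the free group
on the support by the normal closure of the relations `[g][h][gh]⁻¹`. -/
def GrAlg.univGroup (X : GrAlg F) : Type u :=
  FreeGroup X.supp ⧸ Subgroup.normalClosure X.univRels

noncomputable instance (X : GrAlg F) : Group X.univGroup :=
  inferInstanceAs (Group (FreeGroup X.supp ⧸ Subgroup.normalClosure X.univRels))
lemma GrAlg.eq_of_mem_comp (X : GrAlg F) {a : X.A} {g h : X.G} (ha : a ≠ 0)
    (h1 : a ∈ X.comp g) (h2 : a ∈ X.comp h) : g = h := by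
  by_contra hne
  have hd : Disjoint (X.comp g) (X.comp h) :=
    (X.independent g).mono_right
      (le_iSup₂ (f := fun (j : X.G) (_ : j ≠ g) => X.comp j) h (Ne.symm hne))
  exact ha (Submodule.disjoint_def.mp hd a h1 h2)

namespace TGrAlgHom

variable {X Y : GrAlg F} (f : TGrAlgHom X Y)

/-- The component of `Y` into which the component `X.comp s` is mapped. -/
noncomputable def targ (s : X.supp) : Y.G := (f.graded s.1).choose

lemma targ_spec (s : X.supp) : ∀ a ∈ X.comp s.1, f.hom a ∈ Y.comp (f.targ s) :=
  (f.graded s.1).choose_spec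

lemma hom_ne_zero (s : X.supp) {a : X.A} (ha : a ∈ X.comp s.1) (hne : a ≠ 0) :
    f.hom a ≠ 0 := by
  intro h0
  exact hne (f.injOn s.1 ha (Submodule.zero_mem _) (by simpa using h0))

lemma targ_mem (s : X.supp) : f.targ s ∈ Y.supp := by
  obtain ⟨a, ha, hne⟩ := Submodule.exists_mem_ne_zero_of_ne_bot s.2
  exact Submodule.ne_bot_iff _ |>.mpr ⟨f.hom a, f.targ_spec s a ha, f.hom_ne_zero s ha hne⟩

/-- The lift of the support map to the free group on the support. -/
noncomputable def univMapAux : FreeGroup X.supp →* Y.univGroup :=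
  FreeGroup.lift fun s =>
    (QuotientGroup.mk (FreeGroup.of (⟨f.targ s, f.targ_mem s⟩ : Y.supp)) : Y.univGroup)

lemma univMapAux_rels : ∀ w ∈ X.univRels, f.univMapAux w = 1 := by
  rintro w ⟨g, h, hgh, ⟨a, ha, b, hb, hab⟩, rfl⟩
  have habmem : a * b ∈ X.comp (g.1 * h.1) := X.mul_mem ha hb
  have hfa : f.hom a ∈ Y.comp (f.targ g) := f.targ_spec g a ha
  have hfb : f.hom b ∈ Y.comp (f.targ h) := f.targ_spec h b hb
  have hfab : f.hom (a * b) ∈ Y.comp (f.targ g * f.targ h) := by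
    rw [map_mul]
    exact Y.mul_mem hfa hfb
  have hfabne : f.hom (a * b) ≠ 0 := f.hom_ne_zero ⟨g.1 * h.1, hgh⟩ habmem hab
  have key : f.targ ⟨g.1 * h.1, hgh⟩ = f.targ g * f.targ h :=
    Y.eq_of_mem_comp hfabne (f.targ_spec ⟨g.1 * h.1, hgh⟩ _ habmem) hfab
  have hmem : f.targ g * f.targ h ∈ Y.supp := key ▸ f.targ_mem ⟨g.1 * h.1, hgh⟩
  have hrel : FreeGroup.of (⟨f.targ g, f.targ_mem g⟩ : Y.supp) *
      FreeGroup.of (⟨f.targ h, f.targ_mem h⟩ : Y.supp) *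
      (FreeGroup.of (⟨f.targ g * f.targ h, hmem⟩ : Y.supp))⁻¹ ∈ Y.univRels := by
    refine ⟨⟨f.targ g, f.targ_mem g⟩, ⟨f.targ h, f.targ_mem h⟩, hmem,
      ⟨f.hom a, hfa, f.hom b, hfb, ?_⟩, rfl⟩
    rw [← map_mul]
    exact hfabne
  have heq : (⟨f.targ ⟨g.1 * h.1, hgh⟩, f.targ_mem _⟩ : Y.supp) =
      (⟨f.targ g * f.targ h, hmem⟩ : Y.supp) := Subtype.ext key
  show (FreeGroup.lift (fun s => (QuotientGroup.mk (FreeGroup.of (⟨f.targ s, f.targ_mem s⟩ : Y.supp)) :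
    FreeGroup Y.supp ⧸ Subgroup.normalClosure Y.univRels))) _ = 1
  simp only [map_mul, map_inv, FreeGroup.lift_apply_of, heq]
  rw [← QuotientGroup.mk_inv, ← QuotientGroup.mk_mul, ← QuotientGroup.mk_mul,
    QuotientGroup.eq_one_iff]
  exact Subgroup.subset_normalClosure hrel

/-- The universal grading group functor `R` on morphisms. -/
noncomputable def univMap : X.univGroup →* Y.univGroup :=
  QuotientGroup.lift _ f.univMapAux (by
    intro w hw
    have : Subgroup.normalClosure X.univRels ≤ f.univMapAux.ker :=
      Subgroup.normalClosure_le_normal fun w hw => f.univMapAux_rels w hw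
    exact this hw)

end TGrAlgHom

/-- The universal grading group functor `R₁` on morphisms. -/
noncomputable def TGrAlgOneHom.univMap {X Y : GrAlgOne F} (f : TGrAlgOneHom X Y) :
    X.univGroup →* Y.univGroup :=
  f.toTGrAlgHom.univMap
section Statement

variable (F : Type u) [Field F]

section Aux

lemma freeGroup_eq_one {α : Type u} [IsEmpty α] (x : FreeGroup α) : x = 1 := by
  induction x using FreeGroup.induction_on with
  | C1 => rfl
  | of a => exact isEmptyElim a
  | inv_of a h => simp [h]
  | mul a b ha hb => simp [ha, hb]

/-- The zero algebra with the trivial group grading. -/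
def X₀ : GrAlg F where
  A := PUnit
  G := PUnit
  comp _ := ⊥
  mul_mem _ _ a b _ _ := by simp [Subsingleton.elim (a * b) 0]
  independent _ := disjoint_bot_left
  spans := by
    rw [eq_top_iff]
    intro x _
    rw [Subsingleton.elim x 0]
    exact zero_mem _

lemma X₀_supp_isEmpty : IsEmpty (X₀ F).supp := ⟨fun s => s.2 rfl⟩

lemma X₀_univGroup_subsingleton : Subsingleton (X₀ F).univGroup := by
  haveI := X₀_supp_isEmpty F
  refine ⟨fun a b => ?_⟩
  obtain ⟨x, rfl⟩ := QuotientGroup.mk_surjective a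
  obtain ⟨y, rfl⟩ := QuotientGroup.mk_surjective b
  rw [freeGroup_eq_one x, freeGroup_eq_one y]

/-- `F` with zero multiplication. -/
def ZeroMulAlg : Type u := F

instance : AddCommGroup (ZeroMulAlg F) := inferInstanceAs (AddCommGroup F)
instance : Module F (ZeroMulAlg F) := inferInstanceAs (Module F F)
instance : Nontrivial (ZeroMulAlg F) := inferInstanceAs (Nontrivial F)
instance : NonUnitalRing (ZeroMulAlg F) where
  mul _ _ := 0
  left_distrib _ _ _ := (add_zero 0).symm
  right_distrib _ _ _ := (add_zero 0).symm
  zero_mul _ := rfl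
  mul_zero _ := rfl
  mul_assoc _ _ _ := rfl

lemma zeroMulAlg_mul (a b : ZeroMulAlg F) : a * b = 0 := rfl

instance : SMulCommClass F (ZeroMulAlg F) (ZeroMulAlg F) :=
  ⟨fun c a b => by
    show c • (a * b) = a * (c • b)
    rw [zeroMulAlg_mul, zeroMulAlg_mul, smul_zero]⟩

instance : IsScalarTower F (ZeroMulAlg F) (ZeroMulAlg F) :=
  ⟨fun c a b => by
    show (c • a) * b = c • (a * b)
    rw [zeroMulAlg_mul, zeroMulAlg_mul, smul_zero]⟩

/-- `F` with zero multiplication, concentrated at one point. -/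
def X₁ : GrAlg F where
  A := ZeroMulAlg F
  G := PUnit
  comp _ := ⊤
  mul_mem _ _ _ _ _ _ := trivial
  independent i := by
    have h : (⨆ j, ⨆ _ : j ≠ i, (⊤ : Submodule F (ZeroMulAlg F))) = ⊥ :=
      iSup_eq_bot.2 fun j => iSup_eq_bot.2 fun hj => absurd (Subsingleton.elim j i) hj
    exact h ▸ disjoint_bot_right
  spans := iSup_const

lemma X₁_supp_mem : PUnit.unit ∈ (X₁ F).supp := by
  simp only [GrAlg.supp, Set.mem_setOf_eq, X₁]
  exact (top_ne_bot : (⊤ : Submodule F (ZeroMulAlg F)) ≠ ⊥)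

lemma X₁_univRels_empty : (X₁ F).univRels = ∅ := by
  ext w
  simp only [GrAlg.univRels, Set.mem_setOf_eq, Set.mem_empty_iff_false, iff_false]
  rintro ⟨g, h, hgh, ⟨a, _, b, _, hab⟩, _⟩
  exact hab (zeroMulAlg_mul F a b)

lemma X₁_univGroup_nontrivial :
    ∃ x : (X₁ F).univGroup, x ≠ 1 := by
  refine ⟨QuotientGroup.mk (FreeGroup.of ⟨PUnit.unit, X₁_supp_mem F⟩), ?_⟩
  intro h1
  replace h1 := (QuotientGroup.eq_one_iff _).mp h1
  have hle : Subgroup.normalClosure (X₁ F).univRels ≤ ⊥ := by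
    rw [X₁_univRels_empty]
    exact Subgroup.normalClosure_le_normal (Set.empty_subset _)
  have h2 : FreeGroup.of (⟨PUnit.unit, X₁_supp_mem F⟩ : (X₁ F).supp) = 1 := hle h1
  have h3 := congrArg (FreeGroup.lift fun _ => Multiplicative.ofAdd (1 : ℤ)) h2
  simp only [FreeGroup.lift_apply_of, map_one] at h3
  exact one_ne_zero (ofAdd_eq_one.mp h3)

end Aux

/-- The data of a left adjoint to the universal grading group functor
`R : tilde{GrAlg_F} → Grp`: a functor `K` from groups to graded algebras together with a
bijection `Hom(K H, X) ≃ Hom(H, R X)` natural in both variables. -/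
structure LeftAdjointDataR (F : Type u) [Field F] where
  K : ∀ (H : Type u) [Group H], GrAlg F
  Kmap : ∀ {H₁ H₂ : Type u} [Group H₁] [Group H₂], (H₁ →* H₂) → TGrAlgHom (K H₁) (K H₂)
  Kmap_id : ∀ (H : Type u) [Group H], Kmap (MonoidHom.id H) = TGrAlgHom.id (K H)
  Kmap_comp : ∀ {H₁ H₂ H₃ : Type u} [Group H₁] [Group H₂] [Group H₃]
    (f : H₁ →* H₂) (g : H₂ →* H₃), Kmap (g.comp f) = (Kmap g).comp (Kmap f)
  θ : ∀ (H : Type u) [Group H] (X : GrAlg F), TGrAlgHom (K H) X ≃ (H →* X.univGroup)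
  θ_nat_left : ∀ {H₁ H₂ : Type u} [Group H₁] [Group H₂] (f : H₁ →* H₂) (X : GrAlg F)
    (u : TGrAlgHom (K H₂) X), θ H₁ X (u.comp (Kmap f)) = (θ H₂ X u).comp f
  θ_nat_right : ∀ (H : Type u) [Group H] {X Y : GrAlg F} (v : TGrAlgHom X Y)
    (u : TGrAlgHom (K H) X), θ H Y (v.comp u) = v.univMap.comp (θ H X u)

/-- The universal grading group functor `R : tilde{GrAlg_F} → Grp` has no left adjoint. -/
theorem no_left_adjoint_R (F : Type u) [Field F] : ¬ Nonempty (LeftAdjointDataR F) := by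
  rintro ⟨D⟩
  set H := (X₁ F).univGroup with hH
  -- The graded injective map `K H → X₀` forces every component of `K H` to vanish.
  haveI : Subsingleton (X₀ F).A := inferInstanceAs (Subsingleton PUnit)
  let u : TGrAlgHom (D.K H) (X₀ F) := (D.θ H (X₀ F)).symm 1
  have hcomp : ∀ g : (D.K H).G, (D.K H).comp g = ⊥ := by
    intro g
    rw [eq_bot_iff]
    intro a ha
    have h := u.injOn g ha (Submodule.zero_mem _) (Subsingleton.elim _ _)
    simpa using h
  have hzero : ∀ x : (D.K H).A, x = 0 := by
    intro x
    have hx : x ∈ (⊤ : Submodule F (D.K H).A) := trivial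
    rw [← (D.K H).spans] at hx
    simp only [hcomp, iSup_bot, Submodule.mem_bot] at hx
    exact hx
  -- Hence there is at most one morphism `K H → X₁`.
  haveI hsub2 : Subsingleton (TGrAlgHom (D.K H) (X₁ F)) := by
    refine ⟨fun f g => ?_⟩
    apply TGrAlgHom.ext
    refine NonUnitalAlgHom.ext fun a => ?_
    rw [hzero a, map_zero, map_zero]
  have hsing : Subsingleton (H →* (X₁ F).univGroup) :=
    Equiv.subsingleton (D.θ H (X₁ F)).symm
  obtain ⟨x, hx⟩ := X₁_univGroup_nontrivial F
  have heq : (MonoidHom.id H) = (1 : H →* (X₁ F).univGroup) := hsing.elim _ _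
  have := congrArg (fun φ : H →* (X₁ F).univGroup => φ x) heq
  exact hx (by simpa using this)

end Statement
end
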